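/- arXiv:1409.3080 — 2 statements merged into one kernel-verified Lean document; each statement's English description precedes it below -/
import Mathlib

section
/- Fix integers n ≥ 1, q ≥ 2, M ≥ 1. The total number, over all q-ary words W of length M, of pairs (i,j) with 0 ≤ i < j ≤ M such that the contiguous subword of W from position i to position j is an instance of Zₙ, is at most q^M · C(M+1, 2) · (q/(q−1))^{n−1} · q^{−2ⁿ+n+1}, where C(M+1,2) = (M+1)M/2 is a binomial coefficient. (Equivalently, the expected number of Zₙ-instance subword occurrences in a uniformly random q-ary word of length M is at most C(M+1,2)·(q/(q−1))^{n−1}·q^{−2ⁿ+n+1}.) -/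
/-- `W` is an instance of the pattern `V`: the image of `V` under a semigroup
homomorphism sending each letter to a nonempty word. -/
def IsInst {α β : Type} (V : List α) (W : List β) : Prop :=
  ∃ φ : α → List β, (∀ a ∈ V, φ a ≠ []) ∧ W = (V.map φ).flatten

/-- `U` encounters `V`: some contiguous subword (infix) of `U` is an instance of `V`. -/
def Encounters {α β : Type} (U : List β) (V : List α) : Prop :=
  ∃ W : List β, W <:+: U ∧ IsInst V W

/-- `U` avoids `V`: `U` does not encounter `V`. -/
def Avoids {α β : Type} (U : List β) (V : List α) : Prop :=
  ¬ Encounters U V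

/-- The Zimin words over the alphabet ℕ: `Z₀ = ε`, `Z_{n+1} = Zₙ · n · Zₙ`. -/
def Zimin : ℕ → List ℕ
  | 0 => []
  | n + 1 => Zimin n ++ n :: Zimin n

/-- `zimf n q` is the smallest `M` such that every `q`-ary word of length `M`
encounters the Zimin word `Zₙ`. -/
noncomputable def zimf (n q : ℕ) : ℕ :=
  sInf {M : ℕ | ∀ W : List (Fin q), W.length = M → Encounters W (Zimin n)}

/-- `ZC n q M` is the set of `q`-ary words of length `M` that are instances of `Zₙ`. -/
def ZC (n q M : ℕ) : Set (List (Fin q)) :=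
  {W | W.length = M ∧ IsInst (Zimin n) W}


lemma flatten_len_ge {α β : Type} : ∀ (V : List α) (φ : α → List β),
    (∀ a ∈ V, φ a ≠ []) → V.length ≤ ((V.map φ).flatten).length := by
  intro V
  induction V with
  | nil => simp
  | cons a V ih =>
    intro φ h
    simp only [List.map_cons, List.flatten_cons, List.length_append, List.length_cons]
    have h1 : 1 ≤ (φ a).length := List.length_pos_iff.mpr (h a (by simp))
    have h2 := ih φ (fun b hb => h b (by simp [hb]))
    omega

lemma isInst_length {α β : Type} {V : List α} {W : List β} (h : IsInst V W) :
    V.length ≤ W.length := by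
  obtain ⟨φ, hφ, rfl⟩ := h
  exact flatten_len_ge V φ hφ

lemma zimin_length (n : ℕ) : (Zimin n).length + 1 = 2 ^ n := by
  induction n with
  | zero => simp [Zimin]
  | succ n ih => simp only [Zimin, List.length_append, List.length_cons, pow_succ]; omega

lemma zimin_succ_decomp {q n : ℕ} {W : List (Fin q)} (h : IsInst (Zimin (n+1)) W) :
    ∃ P B : List (Fin q), W = P ++ B ++ P ∧ IsInst (Zimin n) P ∧ B ≠ [] := by
  obtain ⟨φ, hφ, rfl⟩ := h
  refine ⟨((Zimin n).map φ).flatten, φ n, ?_, ⟨φ, fun a ha => hφ a ?_, rfl⟩, hφ n ?_⟩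
  · simp [Zimin, List.append_assoc]
  · simp [Zimin, ha]
  · simp [Zimin]
def wordsF (q L : ℕ) : Finset (List (Fin q)) :=
  Finset.image List.ofFn (Finset.univ : Finset (Fin L → Fin q))

lemma mem_wordsF {q L : ℕ} {W : List (Fin q)} : W ∈ wordsF q L ↔ W.length = L := by
  simp only [wordsF, Finset.mem_image, Finset.mem_univ, true_and]
  constructor
  · rintro ⟨f, rfl⟩; simp
  · rintro rfl; exact ⟨W.get, List.ofFn_get W⟩

lemma card_wordsF (q L : ℕ) : (wordsF q L).card = q ^ L := by
  rw [wordsF, Finset.card_image_of_injective _ List.ofFn_injective, Finset.card_univ]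
  simp

open Classical in
noncomputable def ZCF (n q L : ℕ) : Finset (List (Fin q)) :=
  (wordsF q L).filter (fun W => IsInst (Zimin n) W)

lemma mem_ZCF {n q L : ℕ} {W : List (Fin q)} :
    W ∈ ZCF n q L ↔ W.length = L ∧ IsInst (Zimin n) W := by
  simp [ZCF, Finset.mem_filter, mem_wordsF]

open Classical in
noncomputable def dec (n q : ℕ) (W : List (Fin q)) : List (Fin q) × List (Fin q) :=
  if h : ∃ PB : List (Fin q) × List (Fin q),
      W = PB.1 ++ PB.2 ++ PB.1 ∧ IsInst (Zimin n) PB.1 ∧ PB.2 ≠ [] then h.choose else ([], [])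

lemma dec_spec {n q : ℕ} {W : List (Fin q)} (h : IsInst (Zimin (n+1)) W) :
    W = (dec n q W).1 ++ (dec n q W).2 ++ (dec n q W).1 ∧
      IsInst (Zimin n) (dec n q W).1 ∧ (dec n q W).2 ≠ [] := by
  obtain ⟨P, B, h1, h2, h3⟩ := zimin_succ_decomp h
  have hex : ∃ PB : List (Fin q) × List (Fin q),
      W = PB.1 ++ PB.2 ++ PB.1 ∧ IsInst (Zimin n) PB.1 ∧ PB.2 ≠ [] := ⟨(P, B), h1, h2, h3⟩
  simp only [dec, dif_pos hex]
  exact hex.choose_spec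
lemma ZCF_card_le_pow (n q L : ℕ) : (ZCF n q L).card ≤ q ^ L := by
  calc (ZCF n q L).card ≤ (wordsF q L).card :=
        Finset.card_le_card (fun W hW => mem_wordsF.mpr (mem_ZCF.mp hW).1)
    _ = q ^ L := card_wordsF q L

lemma ZCF_eq_empty {n q L : ℕ} (h : L + 1 < 2 ^ n) : ZCF n q L = ∅ := by
  ext W
  simp only [mem_ZCF, Finset.notMem_empty, iff_false, not_and]
  rintro rfl hinst
  have h1 := isInst_length hinst
  have h2 := zimin_length n
  omega

lemma ZCF_succ_le (n q L : ℕ) :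
    (ZCF (n+1) q L).card ≤
      ∑ p ∈ (Finset.range L).filter (fun p => 2*p < L ∧ 2^n ≤ p+1),
        (ZCF n q p).card * q ^ (L - 2*p) := by
  classical
  have hmem : ∀ W ∈ ZCF (n+1) q L,
      (dec n q W).1.length ∈ (Finset.range L).filter (fun p => 2*p < L ∧ 2^n ≤ p+1) := by
    intro W hW
    obtain ⟨hlen, hinst⟩ := mem_ZCF.mp hW
    obtain ⟨heq, hP, hB⟩ := dec_spec hinst
    have hBlen : 1 ≤ (dec n q W).2.length := List.length_pos_iff.mpr hB
    have hWlen : W.length = (dec n q W).1.length + (dec n q W).2.length + (dec n q W).1.length := by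
      have := congrArg List.length heq
      simp only [List.length_append] at this
      omega
    have hPlen := isInst_length hP
    have hz := zimin_length n
    simp only [Finset.mem_filter, Finset.mem_range]
    omega
  rw [Finset.card_eq_sum_card_fiberwise hmem]
  apply Finset.sum_le_sum
  intro p hp
  calc ((ZCF (n+1) q L).filter (fun W => (dec n q W).1.length = p)).card
      ≤ ((ZCF n q p) ×ˢ (wordsF q (L - 2*p))).card := by
        apply Finset.card_le_card_of_injOn (dec n q)
        · intro W hW
          obtain ⟨hW', hfib⟩ := Finset.mem_filter.mp hW
          obtain ⟨hlen, hinst⟩ := mem_ZCF.mp hW'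
          obtain ⟨heq, hP, hB⟩ := dec_spec hinst
          have hWlen : W.length =
              (dec n q W).1.length + (dec n q W).2.length + (dec n q W).1.length := by
            have := congrArg List.length heq
            simp only [List.length_append] at this
            omega
          refine Finset.mem_product.mpr ⟨mem_ZCF.mpr ⟨hfib, hP⟩, mem_wordsF.mpr ?_⟩
          omega
        · intro W hW W' hW' hdec
          obtain ⟨hW1, _⟩ := Finset.mem_filter.mp hW
          obtain ⟨hW1', _⟩ := Finset.mem_filter.mp hW'
          obtain ⟨heq, _, _⟩ := dec_spec (mem_ZCF.mp hW1).2
          obtain ⟨heq', _, _⟩ := dec_spec (mem_ZCF.mp hW1').2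
          rw [heq, heq', hdec]
    _ = (ZCF n q p).card * q ^ (L - 2*p) := by rw [Finset.card_product, card_wordsF]
lemma geom_range_le {r : ℝ} (h0 : 0 ≤ r) (h1 : r < 1) (m : ℕ) :
    ∑ i ∈ Finset.range m, r ^ i ≤ (1 - r)⁻¹ := by
  rw [geom_sum_eq (ne_of_lt h1)]
  have hpos : 0 < 1 - r := by linarith
  have heq : (r ^ m - 1) / (r - 1) = (1 - r ^ m) / (1 - r) := by
    rw [← neg_div_neg_eq]; ring_nf
  rw [heq]
  calc (1 - r ^ m) / (1 - r) ≤ 1 / (1 - r) := by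
        have : (0:ℝ) ≤ r ^ m := pow_nonneg h0 m
        gcongr; linarith
    _ = (1 - r)⁻¹ := one_div _

lemma geom_Ico_le {r : ℝ} (h0 : 0 ≤ r) (h1 : r < 1) (a b : ℕ) :
    ∑ p ∈ Finset.Ico a b, r ^ p ≤ r ^ a * (1 - r)⁻¹ := by
  rcases le_or_gt a b with hab | hab
  · rw [Finset.sum_Ico_eq_sum_range]
    simp_rw [pow_add, ← Finset.mul_sum]
    exact mul_le_mul_of_nonneg_left (geom_range_le h0 h1 _) (pow_nonneg h0 a)
  · rw [Finset.Ico_eq_empty (by omega)]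
    simp only [Finset.sum_empty]
    exact mul_nonneg (pow_nonneg h0 a) (inv_nonneg.mpr (by linarith))
lemma key_bound {q : ℕ} (hq : 2 ≤ q) (n : ℕ) (hn : 1 ≤ n) :
    ∀ L, ((ZCF n q L).card : ℝ) ≤
      (q:ℝ)^L * ((q:ℝ)/((q:ℝ)-1))^(n-1) * ((q:ℝ)^(2^n - n - 1))⁻¹ := by
  have hq2 : (2:ℝ) ≤ (q:ℝ) := by exact_mod_cast hq
  have hq0 : (0:ℝ) < q := by linarith
  have hq1 : (1:ℝ) < q := by linarith
  have hqinv0 : (0:ℝ) ≤ (q:ℝ)⁻¹ := by positivity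
  have hqinv1 : (q:ℝ)⁻¹ < 1 := by
    rw [inv_lt_one_iff₀]; right; exact hq1
  induction n, hn using Nat.le_induction with
  | base =>
    intro L
    norm_num
    calc ((ZCF 1 q L).card : ℝ) ≤ ((q ^ L : ℕ) : ℝ) := by exact_mod_cast ZCF_card_le_pow 1 q L
      _ = (q:ℝ) ^ L := by push_cast; ring
  | succ n hn ih =>
    intro L
    have h2n : n + 1 ≤ 2 ^ n := Nat.lt_two_pow_self (n := n)
    set A : ℝ := (q:ℝ)/((q:ℝ)-1) with hA
    set C : ℝ := A^(n-1) * ((q:ℝ)^(2^n - n - 1))⁻¹ with hC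
    have hApos : 0 < A := div_pos hq0 (by linarith)
    have hCpos : 0 ≤ C := by rw [hC]; positivity
    set s := (Finset.range L).filter (fun p => 2*p < L ∧ 2^n ≤ p+1) with hs
    calc ((ZCF (n+1) q L).card : ℝ)
        ≤ ∑ p ∈ s, ((ZCF n q p).card : ℝ) * (q:ℝ) ^ (L - 2*p) := by
          exact_mod_cast ZCF_succ_le n q L
      _ ≤ ∑ p ∈ s, ((q:ℝ)^p * C) * (q:ℝ) ^ (L - 2*p) := by
          apply Finset.sum_le_sum; intro p hp
          apply mul_le_mul_of_nonneg_right ?_ (pow_nonneg hq0.le _)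
          calc ((ZCF n q p).card : ℝ) ≤ (q:ℝ)^p * A^(n-1) * ((q:ℝ)^(2^n - n - 1))⁻¹ := ih p
            _ = (q:ℝ)^p * C := by rw [hC, mul_assoc]
      _ = ∑ p ∈ s, (C * (q:ℝ)^L) * ((q:ℝ)⁻¹) ^ p := by
          apply Finset.sum_congr rfl; intro p hp
          have hp' : 2*p < L := by
            simp only [hs, Finset.mem_filter] at hp; exact hp.2.1
          rw [pow_sub₀ _ (ne_of_gt hq0) (le_of_lt hp'), two_mul, pow_add, inv_pow]
          field_simp
      _ ≤ (C * (q:ℝ)^L) * ∑ p ∈ Finset.Ico (2^n - 1) L, ((q:ℝ)⁻¹)^p := by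
          rw [← Finset.mul_sum]
          apply mul_le_mul_of_nonneg_left ?_ (by positivity)
          apply Finset.sum_le_sum_of_subset_of_nonneg
          · intro p hp
            simp only [hs, Finset.mem_filter, Finset.mem_range, Finset.mem_Ico] at hp ⊢
            omega
          · intro p _ _; positivity
      _ ≤ (C * (q:ℝ)^L) * (((q:ℝ)⁻¹)^(2^n - 1) * (1 - (q:ℝ)⁻¹)⁻¹) :=
          mul_le_mul_of_nonneg_left (geom_Ico_le hqinv0 hqinv1 _ _) (by positivity)
      _ = (q:ℝ)^L * A^(n+1-1) * ((q:ℝ)^(2^(n+1) - (n+1) - 1))⁻¹ := by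
          have e5 : n - 1 + 1 = n := by omega
          have e2 : 2^(n+1) - (n+1) - 1 = (2^n - n - 1) + (2^n - 1) := by
            have hx : n + 1 ≤ 2^n := h2n
            rw [pow_succ]; omega
          have e3 : (1 - (q:ℝ)⁻¹)⁻¹ = A := by
            rw [hA, show (1 - (q:ℝ)⁻¹) = ((q:ℝ)-1)/(q:ℝ) by field_simp, inv_div]
          have e1 : n + 1 - 1 = n := by omega
          have e6 : A^n = A^(n-1) * A := by rw [← pow_succ, e5]
          rw [e1, e2, e3, hC, pow_add, mul_inv, inv_pow, e6]
          ring
lemma reconstruct {q : ℕ} (W : List (Fin q)) (i j : ℕ) (hij : i ≤ j) (hjM : j ≤ W.length) :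
    (W.take i ++ W.drop j).take i ++ (W.drop i).take (j - i) ++ (W.take i ++ W.drop j).drop i
      = W := by
  have h1 : (W.take i).length = i := by rw [List.length_take]; omega
  rw [List.take_left' h1, List.drop_left' h1, List.append_assoc]
  conv_rhs => rw [← List.take_append_drop i W]
  congr 1
  conv_rhs => rw [← List.take_append_drop (j - i) (W.drop i)]
  congr 1
  rw [List.drop_drop]
  congr 1
  omega

lemma card_pairs (N : ℕ) :
    (((Finset.range N) ×ˢ (Finset.range N)).filter (fun ij => ij.1 < ij.2)).card
      = N.choose 2 := by
  classical
  set pr := ((Finset.range N) ×ˢ (Finset.range N)).filter (fun ij => ij.1 < ij.2) with hpr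
  have hmem : ∀ x ∈ pr, Prod.snd x ∈ Finset.range N := by
    intro x hx
    simp only [hpr, Finset.mem_filter, Finset.mem_product] at hx
    exact hx.1.2
  rw [Finset.card_eq_sum_card_fiberwise hmem]
  have hfib : ∀ j ∈ Finset.range N,
      (pr.filter (fun x => Prod.snd x = j)) = (Finset.range j).image (fun i => (i, j)) := by
    intro j hj
    rw [Finset.mem_range] at hj
    ext ⟨a, b⟩
    simp only [hpr, Finset.mem_filter, Finset.mem_product, Finset.mem_range, Finset.mem_image,
      Prod.mk.injEq]
    constructor
    · rintro ⟨⟨⟨_, _⟩, hab⟩, rfl⟩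
      exact ⟨a, hab, rfl, rfl⟩
    · rintro ⟨i, hi, rfl, rfl⟩
      omega
  calc ∑ j ∈ Finset.range N, (pr.filter (fun x => Prod.snd x = j)).card
      = ∑ j ∈ Finset.range N, j := by
        apply Finset.sum_congr rfl
        intro j hj
        rw [hfib j hj, Finset.card_image_of_injective _ (fun a b h => (Prod.mk.injEq _ _ _ _).mp h |>.1),
          Finset.card_range]
    _ = N.choose 2 := by rw [Finset.sum_range_id, Nat.choose_two_right]

/-- The total number, over all `q`-ary words `W` of length `M`, of pairs `(i,j)` with
`0 ≤ i < j ≤ M` such that the contiguous subword of `W` from position `i` to position `j`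
is an instance of `Zₙ`, is at most
`q^M · C(M+1,2) · (q/(q−1))^{n−1} · q^{−2ⁿ+n+1}`. -/
theorem zimin_subword_count_upper (n q M : ℕ) (hn : 1 ≤ n) (hq : 2 ≤ q) (hM : 1 ≤ M) :
    (({p : List (Fin q) × ℕ × ℕ |
        p.1.length = M ∧ p.2.1 < p.2.2 ∧ p.2.2 ≤ M ∧
        IsInst (Zimin n) ((p.1.drop p.2.1).take (p.2.2 - p.2.1))}.ncard : ℝ)) ≤
      (q : ℝ) ^ M * (Nat.choose (M + 1) 2 : ℝ) *
        ((q : ℝ) / ((q : ℝ) - 1)) ^ (n - 1) * (q : ℝ) ^ (-(2 ^ n : ℤ) + n + 1) := by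
  classical
  have hq2 : (2:ℝ) ≤ (q:ℝ) := by exact_mod_cast hq
  have hq0 : (0:ℝ) < q := by linarith
  have h2n : n + 1 ≤ 2 ^ n := Nat.lt_two_pow_self (n := n)
  set A : ℝ := (q:ℝ)/((q:ℝ)-1) with hA
  have hApos : 0 < A := div_pos hq0 (by linarith)
  set Cf : ℝ := A^(n-1) * ((q:ℝ)^(2^n - n - 1))⁻¹ with hCf
  have hCfpos : 0 ≤ Cf := by
    apply mul_nonneg (pow_nonneg hApos.le _) (inv_nonneg.mpr (pow_nonneg hq0.le _))
  -- the finset version of the set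
  set SF : Finset (List (Fin q) × ℕ × ℕ) :=
    ((wordsF q M) ×ˢ ((Finset.range (M+1)) ×ˢ (Finset.range (M+1)))).filter
      (fun p => p.2.1 < p.2.2 ∧ p.2.2 ≤ M ∧
        IsInst (Zimin n) ((p.1.drop p.2.1).take (p.2.2 - p.2.1))) with hSF
  have hset : {p : List (Fin q) × ℕ × ℕ |
      p.1.length = M ∧ p.2.1 < p.2.2 ∧ p.2.2 ≤ M ∧
      IsInst (Zimin n) ((p.1.drop p.2.1).take (p.2.2 - p.2.1))} = ↑SF := by
    ext p
    simp only [hSF, Set.mem_setOf_eq, Finset.coe_filter, Finset.mem_coe, Finset.mem_product,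
      Finset.mem_range, mem_wordsF]
    constructor
    · rintro ⟨h1, h2, h3, h4⟩
      exact ⟨⟨h1, by omega, by omega⟩, h2, h3, h4⟩
    · rintro ⟨⟨h1, _, _⟩, h2, h3, h4⟩
      exact ⟨h1, h2, h3, h4⟩
  rw [hset, Set.ncard_coe_finset]
  set pairs := ((Finset.range (M+1)) ×ˢ (Finset.range (M+1))).filter (fun ij => ij.1 < ij.2)
    with hpairs
  have hmem : ∀ p ∈ SF, p.2 ∈ pairs := by
    intro p hp
    simp only [hSF, Finset.mem_filter, Finset.mem_product, Finset.mem_range] at hp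
    simp only [hpairs, Finset.mem_filter, Finset.mem_product, Finset.mem_range]
    exact ⟨⟨hp.1.2.1, hp.1.2.2⟩, hp.2.1⟩
  have hcard : SF.card = ∑ ij ∈ pairs, (SF.filter (fun p => p.2 = ij)).card :=
    Finset.card_eq_sum_card_fiberwise hmem
  have hfibN : ∀ ij ∈ pairs,
      (SF.filter (fun p => p.2 = ij)).card ≤
        q ^ (M - (ij.2 - ij.1)) * (ZCF n q (ij.2 - ij.1)).card := by
    rintro ⟨i, j⟩ hij
    simp only [hpairs, Finset.mem_filter, Finset.mem_product, Finset.mem_range] at hij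
    calc (SF.filter (fun p => p.2 = (i, j))).card
        ≤ ((wordsF q (M - (j - i))) ×ˢ (ZCF n q (j - i))).card := by
          apply Finset.card_le_card_of_injOn
            (fun p => (p.1.take i ++ p.1.drop j, (p.1.drop i).take (j - i)))
          · rintro ⟨W, ij'⟩ hp
            simp only [hSF, Finset.mem_coe, Finset.mem_filter, Finset.mem_product, Finset.mem_range,
              mem_wordsF] at hp
            obtain ⟨⟨⟨hW, _, _⟩, hlt, hle, hinst⟩, hij2⟩ := hp
            subst hij2
            simp only at hlt hle hinst ⊢
            refine Finset.mem_product.mpr ⟨mem_wordsF.mpr ?_, mem_ZCF.mpr ⟨?_, hinst⟩⟩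
            · simp only [List.length_append, List.length_take, List.length_drop, hW]
              omega
            · simp only [List.length_take, List.length_drop, hW]
              omega
          · rintro ⟨W, ij'⟩ hp ⟨W', ij''⟩ hp' heq
            simp only [hSF, Finset.mem_coe, Finset.mem_filter, Finset.mem_product,
              Finset.mem_range, mem_wordsF] at hp hp'
            obtain ⟨⟨⟨hW, _, _⟩, hlt, hle, _⟩, hij2⟩ := hp
            obtain ⟨⟨⟨hW', _, _⟩, hlt', hle', _⟩, hij2'⟩ := hp'
            subst hij2; subst hij2'
            simp only [Prod.mk.injEq] at heq ⊢
            obtain ⟨h1, h2⟩ := heq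
            refine ⟨?_, trivial⟩
            have r1 := reconstruct W i j (le_of_lt hlt) (by omega)
            have r2 := reconstruct W' i j (le_of_lt hlt') (by omega)
            rw [← r1, ← r2, h1, h2]
      _ = q ^ (M - (j - i)) * (ZCF n q (j - i)).card := by
          rw [Finset.card_product, card_wordsF]
  -- real-number chain
  have key := key_bound hq n hn
  have hzp : (q:ℝ) ^ (-(2 ^ n : ℤ) + n + 1) = ((q:ℝ)^(2^n - n - 1 : ℕ))⁻¹ := by
    have he : (-(2 ^ n : ℤ) + n + 1) = -((2^n - n - 1 : ℕ) : ℤ) := by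
      have hk : ((2^n - n - 1 : ℕ) : ℤ) = ((2^n : ℕ) : ℤ) - n - 1 := by omega
      rw [hk]; push_cast; ring
    rw [he, zpow_neg, zpow_natCast]
  calc (SF.card : ℝ)
      = ∑ ij ∈ pairs, ((SF.filter (fun p => p.2 = ij)).card : ℝ) := by
        rw [hcard]; push_cast; ring
    _ ≤ ∑ _ij ∈ pairs, (q:ℝ)^M * Cf := by
        apply Finset.sum_le_sum
        intro ij hij
        have hdM : ij.2 - ij.1 ≤ M := by
          simp only [hpairs, Finset.mem_filter, Finset.mem_product, Finset.mem_range] at hij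
          omega
        set d := ij.2 - ij.1 with hd
        calc ((SF.filter (fun p => p.2 = ij)).card : ℝ)
            ≤ ((q ^ (M - d) * (ZCF n q d).card : ℕ) : ℝ) := by
              exact_mod_cast hfibN ij hij
          _ = (q:ℝ)^(M - d) * ((ZCF n q d).card : ℝ) := by push_cast; ring
          _ ≤ (q:ℝ)^(M - d) * ((q:ℝ)^d * Cf) := by
              apply mul_le_mul_of_nonneg_left ?_ (pow_nonneg hq0.le _)
              calc ((ZCF n q d).card : ℝ) ≤ (q:ℝ)^d * A^(n-1) * ((q:ℝ)^(2^n - n - 1))⁻¹ := key d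
                _ = (q:ℝ)^d * Cf := by rw [hCf, mul_assoc]
          _ = (q:ℝ)^M * Cf := by
              rw [← mul_assoc, ← pow_add]
              congr 2
              omega
    _ = (pairs.card : ℝ) * ((q:ℝ)^M * Cf) := by
        rw [Finset.sum_const, nsmul_eq_mul]
    _ = ((M+1).choose 2 : ℝ) * ((q:ℝ)^M * Cf) := by
        rw [hpairs, card_pairs (M+1)]
    _ = (q : ℝ) ^ M * (Nat.choose (M + 1) 2 : ℝ) * A ^ (n - 1) * (q:ℝ) ^ (-(2 ^ n : ℤ) + n + 1) := by
        rw [hzp, hCf]; ring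
end

section
/- Fix n ≥ 2 and suppose W = W₁W₀aW₁ and W' = V₁V₀bV₁ are words of the same length, where a and b are single letters, W₁ and V₁ are instances of Z_{n−1}, and W₁ (respectively V₁) has minimal length among all decompositions of W₁W₀W₁ (respectively V₁V₀V₁) of the form (prefix = suffix = a Z_{n−1}-instance, shorter than half the word). If W = W', then W₁ = V₁, W₀ = V₀, and a = b. Consequently, the map sending a Zₙ-instance of length M together with a letter from a q-letter alphabet to the word W₁W₀aW₁ (obtained from the minimal decomposition W = W₁W₀W₁) is an injection from C(n,q,M) × alphabet into C(n,q,M+1). -/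
lemma mem_zimin_lt : ∀ m, ∀ a ∈ Zimin m, a < m := by
  intro m
  induction m with
  | zero => simp [Zimin]
  | succ k ih =>
    intro a ha
    simp only [Zimin, List.mem_append, List.mem_cons] at ha
    rcases ha with h | h | h
    · exact (ih a h).trans (Nat.lt_succ_self k)
    · omega
    · exact (ih a h).trans (Nat.lt_succ_self k)

lemma mid_decomp {α : Type} (T W₁ : List α) (hp : W₁ <+: T) (hs : W₁ <:+ T)
    (hl : 2 * W₁.length ≤ T.length) : ∃ U₀, T = W₁ ++ U₀ ++ W₁ := by
  obtain ⟨r, hr⟩ := hp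
  have hlr : W₁.length ≤ r.length := by
    have := congrArg List.length hr
    simp at this; omega
  have hsr : W₁ <:+ r := by
    rw [List.suffix_iff_eq_drop] at hs
    have hlen : T.length - W₁.length = W₁.length + (r.length - W₁.length) := by
      have := congrArg List.length hr; simp at this; omega
    rw [hlen, ← hr, List.drop_append] at hs
    exact List.suffix_iff_eq_drop.2 (by rwa [List.drop_eq_nil_of_le (by omega), List.nil_append, Nat.add_sub_cancel_left] at hs)
  obtain ⟨U₀, hU⟩ := hsr
  exact ⟨U₀, by rw [← hr, ← hU, List.append_assoc]⟩

lemma le_aux {γ : Type} (P : List γ → Prop) (W₁ W₀ V₁ V₀ : List γ) (a b : γ)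
    (hPW : P W₁)
    (hVlt : 2 * V₁.length < (V₁ ++ V₀ ++ V₁).length)
    (hVmin : ∀ U₁ U₀ : List γ, P U₁ → 2 * U₁.length < (V₁ ++ V₀ ++ V₁).length →
      U₁ ++ U₀ ++ U₁ = V₁ ++ V₀ ++ V₁ → V₁.length ≤ U₁.length)
    (heq : W₁ ++ W₀ ++ a :: W₁ = V₁ ++ V₀ ++ b :: V₁)
    (hle : W₁.length ≤ V₁.length) : V₁.length ≤ W₁.length := by
  have hpW : W₁ <+: V₁ ++ V₀ ++ b :: V₁ :=
    heq ▸ ⟨W₀ ++ a :: W₁, (List.append_assoc _ _ _).symm⟩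
  have hpV : V₁ <+: V₁ ++ V₀ ++ b :: V₁ := ⟨V₀ ++ b :: V₁, (List.append_assoc _ _ _).symm⟩
  have hsW : W₁ <:+ V₁ ++ V₀ ++ b :: V₁ := (List.suffix_cons a W₁).trans (heq ▸ ⟨W₁ ++ W₀, rfl⟩)
  have hsV : V₁ <:+ V₁ ++ V₀ ++ b :: V₁ := (List.suffix_cons b V₁).trans ⟨V₁ ++ V₀, rfl⟩
  have hpv : W₁ <+: V₁ := List.prefix_of_prefix_length_le hpW hpV hle
  have hsv : W₁ <:+ V₁ := List.suffix_of_suffix_length_le hsW hsV hle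
  have hpT : W₁ <+: V₁ ++ V₀ ++ V₁ := hpv.trans ⟨V₀ ++ V₁, by rw [← List.append_assoc]⟩
  have hsT : W₁ <:+ V₁ ++ V₀ ++ V₁ := hsv.trans (List.suffix_append _ _)
  obtain ⟨U₀, hU⟩ := mid_decomp (V₁ ++ V₀ ++ V₁) W₁ hpT hsT (by omega)
  exact hVmin W₁ U₀ hPW (by omega) hU.symm

lemma uniq {γ : Type} (P : List γ → Prop) (W₁ W₀ V₁ V₀ : List γ) (a b : γ)
    (hPW : P W₁)
    (hWlt : 2 * W₁.length < (W₁ ++ W₀ ++ W₁).length)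
    (hWmin : ∀ U₁ U₀ : List γ, P U₁ → 2 * U₁.length < (W₁ ++ W₀ ++ W₁).length →
      U₁ ++ U₀ ++ U₁ = W₁ ++ W₀ ++ W₁ → W₁.length ≤ U₁.length)
    (hPV : P V₁)
    (hVlt : 2 * V₁.length < (V₁ ++ V₀ ++ V₁).length)
    (hVmin : ∀ U₁ U₀ : List γ, P U₁ → 2 * U₁.length < (V₁ ++ V₀ ++ V₁).length →
      U₁ ++ U₀ ++ U₁ = V₁ ++ V₀ ++ V₁ → V₁.length ≤ U₁.length)
    (heq : W₁ ++ W₀ ++ a :: W₁ = V₁ ++ V₀ ++ b :: V₁) :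
    W₁ = V₁ ∧ W₀ = V₀ ∧ a = b := by
  have hlen : W₁.length = V₁.length := by
    rcases le_total W₁.length V₁.length with h | h
    · exact le_antisymm h (le_aux P W₁ W₀ V₁ V₀ a b hPW hVlt hVmin heq h)
    · exact le_antisymm (le_aux P V₁ V₀ W₁ W₀ b a hPV hWlt hWmin heq.symm h) h
  have hsW : W₁ <:+ V₁ ++ V₀ ++ b :: V₁ :=
    (List.suffix_cons a W₁).trans (heq ▸ ⟨W₁ ++ W₀, rfl⟩)
  have hsV : V₁ <:+ V₁ ++ V₀ ++ b :: V₁ := (List.suffix_cons b V₁).trans ⟨V₁ ++ V₀, rfl⟩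
  have h1 : W₁ = V₁ :=
    (List.suffix_of_suffix_length_le hsW hsV hlen.le).eq_of_length hlen
  subst h1
  rw [List.append_assoc, List.append_assoc] at heq
  have h2 := List.append_cancel_left heq
  have h3 := List.append_inj' h2 (by simp)
  exact ⟨rfl, h3.1, by injection h3.2⟩

lemma exists_decomp {q m : ℕ} {W : List (Fin q)} (h : IsInst (Zimin (m + 1)) W) :
    ∃ W₁ W₀ : List (Fin q), IsInst (Zimin m) W₁ ∧ W = W₁ ++ W₀ ++ W₁ ∧
      2 * W₁.length < W.length := by
  obtain ⟨φ, hne, hW⟩ := h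
  refine ⟨((Zimin m).map φ).flatten, φ m,
    ⟨φ, fun a ha => hne a (by simp [Zimin, ha]), rfl⟩, ?_, ?_⟩
  · rw [hW]; simp [Zimin]
  · have hc : φ m ≠ [] := hne m (by simp [Zimin])
    have : 0 < (φ m).length := List.length_pos_iff.2 hc
    have : W.length = 2 * (((Zimin m).map φ).flatten).length + (φ m).length := by
      rw [hW]; simp [Zimin]; ring
    omega

lemma ext_inst {q m : ℕ} {W₁ W₀ : List (Fin q)} (c : Fin q)
    (h : IsInst (Zimin m) W₁) : IsInst (Zimin (m + 1)) (W₁ ++ W₀ ++ c :: W₁) := by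
  obtain ⟨φ, hne, hW⟩ := h
  refine ⟨fun x => if x = m then W₀ ++ [c] else φ x, ?_, ?_⟩
  · intro a ha
    simp only [Zimin, List.mem_append, List.mem_cons] at ha
    rcases ha with hm | hm | hm
    · have := mem_zimin_lt m a hm
      simp [Nat.ne_of_lt this]; exact hne a hm
    · subst hm; simp
    · have := mem_zimin_lt m a hm
      simp [Nat.ne_of_lt this]; exact hne a hm
  · have hmap : (Zimin m).map (fun x => if x = m then W₀ ++ [c] else φ x) = (Zimin m).map φ :=
      List.map_congr_left fun a ha => by simp [Nat.ne_of_lt (mem_zimin_lt m a ha)]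
    simp [Zimin, hmap, ← hW]

/-- Fix `n ≥ 2`. If `W₁W₀aW₁ = V₁V₀bV₁` where `a, b` are single letters, `W₁, V₁` are
instances of `Z_{n−1}` and `W₁` (resp. `V₁`) has minimal length among all decompositions
of `W₁W₀W₁` (resp. `V₁V₀V₁`) as (prefix = suffix = a `Z_{n−1}`-instance shorter than half
the word), then `W₁ = V₁`, `W₀ = V₀` and `a = b`.  Consequently, the map sending a
`Zₙ`-instance of length `M` (with minimal decomposition `W₁W₀W₁`) and a letter `c` of a
`q`-letter alphabet to `W₁W₀cW₁` is an injection `C(n,q,M) × alphabet → C(n,q,M+1)`. -/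
theorem zimin_instance_extension_injective (n q M : ℕ) (hn : 2 ≤ n) (hq : 1 ≤ q)
    (hM : 1 ≤ M) :
    (∀ (W₁ W₀ V₁ V₀ : List (Fin q)) (a b : Fin q),
      IsInst (Zimin (n - 1)) W₁ →
      2 * W₁.length < (W₁ ++ W₀ ++ W₁).length →
      (∀ U₁ U₀ : List (Fin q), IsInst (Zimin (n - 1)) U₁ →
        2 * U₁.length < (W₁ ++ W₀ ++ W₁).length →
        U₁ ++ U₀ ++ U₁ = W₁ ++ W₀ ++ W₁ → W₁.length ≤ U₁.length) →
      IsInst (Zimin (n - 1)) V₁ →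
      2 * V₁.length < (V₁ ++ V₀ ++ V₁).length →
      (∀ U₁ U₀ : List (Fin q), IsInst (Zimin (n - 1)) U₁ →
        2 * U₁.length < (V₁ ++ V₀ ++ V₁).length →
        U₁ ++ U₀ ++ U₁ = V₁ ++ V₀ ++ V₁ → V₁.length ≤ U₁.length) →
      W₁ ++ W₀ ++ a :: W₁ = V₁ ++ V₀ ++ b :: V₁ →
      W₁ = V₁ ∧ W₀ = V₀ ∧ a = b) ∧
    ∃ F : ZC n q M × Fin q → ZC n q (M + 1),
      Function.Injective F ∧
      ∀ p : ZC n q M × Fin q, ∃ W₁ W₀ : List (Fin q),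
        IsInst (Zimin (n - 1)) W₁ ∧
        (p.1 : List (Fin q)) = W₁ ++ W₀ ++ W₁ ∧
        2 * W₁.length < M ∧
        (∀ U₁ U₀ : List (Fin q), IsInst (Zimin (n - 1)) U₁ →
          2 * U₁.length < M →
          U₁ ++ U₀ ++ U₁ = (p.1 : List (Fin q)) → W₁.length ≤ U₁.length) ∧
        (F p : List (Fin q)) = W₁ ++ W₀ ++ p.2 :: W₁ := by
  obtain ⟨m, rfl⟩ : ∃ m, n = m + 1 := ⟨n - 1, by omega⟩
  have hn1 : m + 1 - 1 = m := rfl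
  rw [hn1]
  constructor
  · intro W₁ W₀ V₁ V₀ a b h1 h2 h3 h4 h5 h6 h7
    exact uniq (IsInst (Zimin m)) W₁ W₀ V₁ V₀ a b h1 h2 h3 h4 h5 h6 h7
  · have key : ∀ p : ZC (m + 1) q M × Fin q, ∃ W₁ W₀ : List (Fin q),
        IsInst (Zimin m) W₁ ∧
        (p.1 : List (Fin q)) = W₁ ++ W₀ ++ W₁ ∧
        2 * W₁.length < M ∧
        (∀ U₁ U₀ : List (Fin q), IsInst (Zimin m) U₁ →
          2 * U₁.length < M →
          U₁ ++ U₀ ++ U₁ = (p.1 : List (Fin q)) → W₁.length ≤ U₁.length) ∧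
        (W₁ ++ W₀ ++ p.2 :: W₁) ∈ ZC (m + 1) q (M + 1) := by
      rintro ⟨⟨W, hWlen, hWinst⟩, c⟩
      set S : Set ℕ := {k | ∃ W₁ W₀ : List (Fin q), IsInst (Zimin m) W₁ ∧
        W₁.length = k ∧ 2 * k < M ∧ W = W₁ ++ W₀ ++ W₁} with hS
      have hSne : S.Nonempty := by
        obtain ⟨W₁, W₀, hi, he, hl⟩ := exists_decomp hWinst
        exact ⟨W₁.length, W₁, W₀, hi, rfl, by rw [← hWlen]; exact hl, he⟩
      obtain ⟨W₁, W₀, hi, hlk, hlt, he⟩ := Nat.sInf_mem hSne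
      refine ⟨W₁, W₀, hi, he, by omega, ?_, ?_⟩
      · intro U₁ U₀ hUi hUl hUe
        have : U₁.length ∈ S := ⟨U₁, U₀, hUi, rfl, hUl, hUe.symm⟩
        have := Nat.sInf_le this
        omega
      · constructor
        · have := congrArg List.length he
          simp only [List.length_append, List.length_cons] at this ⊢
          omega
        · exact ext_inst c hi
    choose W₁f W₀f hk using key
    refine ⟨fun p => ⟨W₁f p ++ W₀f p ++ p.2 :: W₁f p, (hk p).2.2.2.2⟩, ?_, ?_⟩
    · intro p p' hFeq
      have heq : W₁f p ++ W₀f p ++ p.2 :: W₁f p = W₁f p' ++ W₀f p' ++ p'.2 :: W₁f p' :=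
        congrArg Subtype.val hFeq
      obtain ⟨h1, h2, h3, h4, h5⟩ := hk p
      obtain ⟨h1', h2', h3', h4', h5'⟩ := hk p'
      have hMp : (W₁f p ++ W₀f p ++ W₁f p).length = M := by
        rw [← h2]; exact (p.1.2).1
      have hMp' : (W₁f p' ++ W₀f p' ++ W₁f p').length = M := by
        rw [← h2']; exact (p'.1.2).1
      have := uniq (IsInst (Zimin m)) (W₁f p) (W₀f p) (W₁f p') (W₀f p') p.2 p'.2
        h1 (by omega)
        (fun U₁ U₀ a b c => h4 U₁ U₀ a (by omega) (by rw [← h2] at c; exact c))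
        h1' (by omega)
        (fun U₁ U₀ a b c => h4' U₁ U₀ a (by omega) (by rw [← h2'] at c; exact c))
        heq
      obtain ⟨e1, e2, e3⟩ := this
      have hfst : p.1 = p'.1 := Subtype.ext (by rw [h2, h2', e1, e2])
      exact Prod.ext hfst e3
    · intro p
      exact ⟨W₁f p, W₀f p, (hk p).1, (hk p).2.1, (hk p).2.2.1, (hk p).2.2.2.1, rfl⟩
end
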